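/- The code C6 = {∅, {4}, {2,3}, {1,5}, {1,2}, {1,2,5}, {2,3,4}, {1,4,5}, {1,2,3}} on five neurons is not a closed convex code: there do not exist closed convex sets U₁,…,U₅ ⊆ ℝᵈ (for any d) whose code of the cover equals C6. -/

import Mathlib

def codeOfCover {n : ℕ} {X : Type*} (U : Fin n → Set X) : Set (Set (Fin n)) :=
  {σ | ∃ x : X, ∀ i, x ∈ U i ↔ i ∈ σ}

set_option maxHeartbeats 2000000 in
/-- The code `C6` (neurons `1,…,5` written as `0,…,4`) is not a closed convex code. -/
theorem stmt_4 :
    ¬ ∃ (d : ℕ) (U : Fin 5 → Set (EuclideanSpace ℝ (Fin d))),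
      (∀ i, IsClosed (U i)) ∧ (∀ i, Convex ℝ (U i)) ∧
      codeOfCover U = ({∅, {3}, {1, 2}, {0, 4}, {0, 1}, {0, 1, 4}, {1, 2, 3},
        {0, 3, 4}, {0, 1, 2}} : Set (Set (Fin 5))) := by
  rintro ⟨d, U, hcl, hcv, hcode⟩
  -- every point's codeword is in the code
  have mem_code : ∀ x : EuclideanSpace ℝ (Fin d),
      {i : Fin 5 | x ∈ U i} ∈ ({∅, {3}, {1, 2}, {0, 4}, {0, 1}, {0, 1, 4}, {1, 2, 3},
        {0, 3, 4}, {0, 1, 2}} : Set (Set (Fin 5))) := by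
    intro x
    rw [← hcode]
    exact ⟨x, fun i => Iff.rfl⟩
  -- atoms are nonempty
  have atom : ∀ T ∈ ({∅, {3}, {1, 2}, {0, 4}, {0, 1}, {0, 1, 4}, {1, 2, 3},
      {0, 3, 4}, {0, 1, 2}} : Set (Set (Fin 5))),
      ∃ x : EuclideanSpace ℝ (Fin d), ∀ i : Fin 5, x ∈ U i ↔ i ∈ T := by
    intro T hT
    rw [← hcode] at hT
    exact hT
  obtain ⟨a, ha⟩ := atom {0, 1, 2} (by simp)
  obtain ⟨b, hb⟩ := atom {0, 1, 4} (by simp)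
  obtain ⟨c, hc⟩ := atom {1, 2, 3} (by simp)
  obtain ⟨e, he⟩ := atom {0, 3, 4} (by simp)
  have ha0 : a ∈ U 0 := (ha 0).mpr (by simp)
  have ha1 : a ∈ U 1 := (ha 1).mpr (by simp)
  have ha2 : a ∈ U 2 := (ha 2).mpr (by simp)
  have hb0 : b ∈ U 0 := (hb 0).mpr (by simp)
  have hb1 : b ∈ U 1 := (hb 1).mpr (by simp)
  have hb4 : b ∈ U 4 := (hb 4).mpr (by simp)
  have hc1 : c ∈ U 1 := (hc 1).mpr (by simp)
  have hc2 : c ∈ U 2 := (hc 2).mpr (by simp)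
  have hc3 : c ∈ U 3 := (hc 3).mpr (by simp)
  have he0 : e ∈ U 0 := (he 0).mpr (by simp)
  have he3 : e ∈ U 3 := (he 3).mpr (by simp)
  have he4 : e ∈ U 4 := (he 4).mpr (by simp)
  -- combinatorial facts about the code
  have fact1 : ∀ x : EuclideanSpace ℝ (Fin d), x ∈ U 1 → x ∉ U 0 → x ∈ U 2 := by
    intro x h1 h0
    have hx := mem_code x
    simp only [Set.mem_insert_iff, Set.mem_singleton_iff] at hx
    rcases hx with h|h|h|h|h|h|h|h|h
    all_goals first
      | (refine absurd ((Set.ext_iff.mp h 0).mpr ?_) h0; simp; done)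
      | (refine (Set.ext_iff.mp h 2).mpr ?_; simp; done)
      | (refine absurd ((Set.ext_iff.mp h 1).mp h1) ?_; simp; done)
  have fact2 : ∀ x : EuclideanSpace ℝ (Fin d), x ∈ U 0 → x ∉ U 1 → x ∈ U 4 := by
    intro x h0 h1
    have hx := mem_code x
    simp only [Set.mem_insert_iff, Set.mem_singleton_iff] at hx
    rcases hx with h|h|h|h|h|h|h|h|h
    all_goals first
      | (refine absurd ((Set.ext_iff.mp h 1).mpr ?_) h1; simp; done)
      | (refine (Set.ext_iff.mp h 4).mpr ?_; simp; done)
      | (refine absurd ((Set.ext_iff.mp h 0).mp h0) ?_; simp; done)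
  have fact3 : ∀ x : EuclideanSpace ℝ (Fin d), x ∈ U 0 → x ∈ U 1 → x ∈ U 3 → False := by
    intro x h0 h1 h3
    have hx := mem_code x
    simp only [Set.mem_insert_iff, Set.mem_singleton_iff] at hx
    rcases hx with h|h|h|h|h|h|h|h|h
    all_goals first
      | (refine absurd ((Set.ext_iff.mp h 0).mp h0) ?_; simp; done)
      | (refine absurd ((Set.ext_iff.mp h 1).mp h1) ?_; simp; done)
      | (refine absurd ((Set.ext_iff.mp h 3).mp h3) ?_; simp; done)
  have fact4 : ∀ x : EuclideanSpace ℝ (Fin d), x ∈ U 2 → x ∈ U 4 → False := by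
    intro x h2 h4
    have hx := mem_code x
    simp only [Set.mem_insert_iff, Set.mem_singleton_iff] at hx
    rcases hx with h|h|h|h|h|h|h|h|h
    all_goals first
      | (refine absurd ((Set.ext_iff.mp h 2).mp h2) ?_; simp; done)
      | (refine absurd ((Set.ext_iff.mp h 4).mp h4) ?_; simp; done)
  -- the big ball containing all four atom points
  set R : ℝ := ‖a‖ + ‖b‖ + ‖c‖ + ‖e‖ with hR
  have hRa : a ∈ Metric.closedBall (0 : EuclideanSpace ℝ (Fin d)) R := by
    rw [mem_closedBall_zero_iff]
    have := norm_nonneg b; have := norm_nonneg c; have := norm_nonneg e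
    linarith
  have hRb : b ∈ Metric.closedBall (0 : EuclideanSpace ℝ (Fin d)) R := by
    rw [mem_closedBall_zero_iff]
    have := norm_nonneg a; have := norm_nonneg c; have := norm_nonneg e
    linarith
  have hRc : c ∈ Metric.closedBall (0 : EuclideanSpace ℝ (Fin d)) R := by
    rw [mem_closedBall_zero_iff]
    have := norm_nonneg a; have := norm_nonneg b; have := norm_nonneg e
    linarith
  have hRe : e ∈ Metric.closedBall (0 : EuclideanSpace ℝ (Fin d)) R := by
    rw [mem_closedBall_zero_iff]
    have := norm_nonneg a; have := norm_nonneg b; have := norm_nonneg c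
    linarith
  set Ball : Set (EuclideanSpace ℝ (Fin d)) := Metric.closedBall 0 R with hBall
  have hBallconv : Convex ℝ Ball := convex_closedBall _ _
  have hBallclosed : IsClosed Ball := Metric.isClosed_closedBall
  have hBallcompact : IsCompact Ball := isCompact_closedBall _ _
  -- first separation : U 2 ∩ Ball  vs  U 4 ∩ Ball
  have hdisj24 : Disjoint (U 2 ∩ Ball) (U 4 ∩ Ball) := by
    rw [Set.disjoint_left]
    rintro x ⟨hx2, -⟩ ⟨hx4, -⟩
    exact fact4 x hx2 hx4
  obtain ⟨f₁, u₁, v₁, hfu, huv, hfv⟩ :=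
    geometric_hahn_banach_compact_closed ((hcv 2).inter hBallconv)
      (hBallcompact.of_isClosed_subset ((hcl 2).inter hBallclosed) Set.inter_subset_right)
      ((hcv 4).inter hBallconv) ((hcl 4).inter hBallclosed) hdisj24
  set δ : ℝ := (v₁ - u₁) / 2 with hδdef
  have hδ : 0 < δ := by simp only [hδdef]; linarith
  set g : EuclideanSpace ℝ (Fin d) → ℝ := fun x => f₁ x - (u₁ + v₁) / 2 with hgdef
  have hgU2 : ∀ x, x ∈ U 2 → x ∈ Ball → g x < -δ := by
    intro x h2 hB
    have := hfu x ⟨h2, hB⟩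
    simp only [hgdef, hδdef]; linarith
  have hgU4 : ∀ x, x ∈ U 4 → x ∈ Ball → δ < g x := by
    intro x h4 hB
    have := hfv x ⟨h4, hB⟩
    simp only [hgdef, hδdef]; linarith
  -- affine evaluation of g on convex combinations
  have gaff : ∀ (p q : EuclideanSpace ℝ (Fin d)) (ca cb : ℝ), ca + cb = 1 →
      g (ca • p + cb • q) = ca * g p + cb * g q := by
    intro p q ca cb hab
    simp only [hgdef, map_add, map_smul, smul_eq_mul]
    linear_combination ((u₁ + v₁) / 2) * hab
  -- intermediate value style crossing lemma
  have cross : ∀ (p q : EuclideanSpace ℝ (Fin d)) (t : ℝ), g p < t → t < g q →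
      ∃ ca cb : ℝ, 0 ≤ ca ∧ 0 ≤ cb ∧ ca + cb = 1 ∧ g (ca • p + cb • q) = t := by
    intro p q t h1 h2
    have hpq : 0 < g q - g p := by linarith
    refine ⟨(g q - t) / (g q - g p), (t - g p) / (g q - g p),
      div_nonneg (by linarith) hpq.le, div_nonneg (by linarith) hpq.le, ?_, ?_⟩
    · field_simp; ring
    · rw [gaff p q _ _ (by field_simp; ring)]
      field_simp
      ring
  -- key dichotomy property in the middle strip
  have key0 : ∀ x, x ∈ Ball → -δ < g x → g x < δ → (x ∈ U 0 ↔ x ∈ U 1) := by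
    intro x hB hgl hgu
    constructor
    · intro h0
      by_contra h1
      have h4 := fact2 x h0 h1
      have := hgU4 x h4 hB
      linarith
    · intro h1
      by_contra h0
      have h2 := fact1 x h1 h0
      have := hgU2 x h2 hB
      linarith
  set τ : ℝ := δ / 2 with hτdef
  have hτ : 0 < τ := by simp only [hτdef]; linarith
  have hτδ : τ < δ := by simp only [hτdef]; linarith
  have hga : g a < -δ := hgU2 a ha2 hRa
  have hgb : δ < g b := hgU4 b hb4 hRb
  have hgc : g c < -δ := hgU2 c hc2 hRc
  have hge : δ < g e := hgU4 e he4 hRe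
  -- the point m on [c,e] at level g = 0
  set A : ℝ := g c with hAdef
  set B : ℝ := g e with hBdef
  have hA : A < -δ := hgc
  have hB2 : δ < B := hge
  have hBA : 0 < B - A := by linarith
  set ma : ℝ := B / (B - A) with hmadef
  set mb : ℝ := -A / (B - A) with hmbdef
  have hma0 : 0 ≤ ma := by
    rw [hmadef]
    apply div_nonneg <;> linarith
  have hmb0 : 0 ≤ mb := by
    rw [hmbdef]
    apply div_nonneg <;> linarith
  have hmab : ma + mb = 1 := by
    rw [hmadef, hmbdef]
    field_simp
    ring
  set m : EuclideanSpace ℝ (Fin d) := ma • c + mb • e with hmdef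
  have hm3 : m ∈ U 3 := hcv 3 hc3 he3 hma0 hmb0 hmab
  have hmBall : m ∈ Ball := hBallconv hRc hRe hma0 hmb0 hmab
  have hgm : g m = 0 := by
    rw [hmdef, gaff c e ma mb hmab, hmadef, hmbdef, ← hAdef, ← hBdef]
    field_simp
    ring
  -- main claim : m ∈ U 0 ∩ U 1, contradicting fact3
  have hmW : m ∈ U 0 ∧ m ∈ U 1 := by
    by_contra hmW
    -- W = U 0 ∩ U 1 ∩ Ball is a nonempty compact convex set not containing m
    set W : Set (EuclideanSpace ℝ (Fin d)) := (U 0 ∩ U 1) ∩ Ball with hWdef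
    have hmW' : m ∉ W := by
      intro hx
      exact hmW ⟨hx.1.1, hx.1.2⟩
    have hWconv : Convex ℝ W := (((hcv 0).inter (hcv 1)).inter hBallconv)
    have hWclosed : IsClosed W := ((hcl 0).inter (hcl 1)).inter hBallclosed
    obtain ⟨f₂, u₂, v₂, hmu, huv₂, hWv⟩ :=
      geometric_hahn_banach_compact_closed (convex_singleton m) isCompact_singleton
        hWconv hWclosed (Set.disjoint_singleton_left.mpr hmW')
    set vf : EuclideanSpace ℝ (Fin d) → ℝ := fun x => -(f₂ x) with hvfdef
    set γ : ℝ := -v₂ with hγdef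
    have hvfW : ∀ y ∈ W, vf y < γ := by
      intro y hy
      have := hWv y hy
      simp only [hvfdef, hγdef]
      linarith
    have hvfm : γ < vf m := by
      have := hmu m rfl
      simp only [hvfdef, hγdef]
      linarith
    have vlin : ∀ (p q : EuclideanSpace ℝ (Fin d)) (ca cb : ℝ),
        vf (ca • p + cb • q) = ca * vf p + cb * vf q := by
      intro p q ca cb
      simp only [hvfdef, map_add, map_smul, smul_eq_mul]
      ring
    -- the two compact slices of W at levels -τ and τ
    set S1 : Set (EuclideanSpace ℝ (Fin d)) := W ∩ {x | g x = -τ} with hS1def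
    set S2 : Set (EuclideanSpace ℝ (Fin d)) := W ∩ {x | g x = τ} with hS2def
    have hgcont : Continuous g := by
      simp only [hgdef]
      exact f₁.continuous.sub continuous_const
    have hS1closed : IsClosed S1 := hWclosed.inter (isClosed_eq hgcont continuous_const)
    have hS2closed : IsClosed S2 := hWclosed.inter (isClosed_eq hgcont continuous_const)
    have hS1compact : IsCompact S1 :=
      hBallcompact.of_isClosed_subset hS1closed (fun x hx => hx.1.2)
    have hS2compact : IsCompact S2 :=
      hBallcompact.of_isClosed_subset hS2closed (fun x hx => hx.1.2)
    -- nonemptiness of the slices, via the segment from a to b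
    have mkslice : ∀ t : ℝ, -δ < t → t < δ → ∃ p : EuclideanSpace ℝ (Fin d),
        p ∈ W ∧ g p = t := by
      intro t htl htu
      obtain ⟨ca, cb, h0a, h0b, hab, hgp⟩ := cross a b t (by linarith) (by linarith)
      refine ⟨ca • a + cb • b, ⟨⟨?_, ?_⟩, ?_⟩, hgp⟩
      · exact hcv 0 ha0 hb0 h0a h0b hab
      · exact hcv 1 ha1 hb1 h0a h0b hab
      · exact hBallconv hRa hRb h0a h0b hab
    obtain ⟨p1, hp1W, hp1g⟩ := mkslice (-τ) (by linarith) (by linarith)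
    obtain ⟨p2, hp2W, hp2g⟩ := mkslice τ (by linarith) (by linarith)
    have hS1ne : S1.Nonempty := ⟨p1, hp1W, hp1g⟩
    have hS2ne : S2.Nonempty := ⟨p2, hp2W, hp2g⟩
    have hvfcont : Continuous vf := by
      simp only [hvfdef]
      exact f₂.continuous.neg
    obtain ⟨s1, hs1S, hs1max⟩ := hS1compact.exists_isMaxOn hS1ne hvfcont.continuousOn
    obtain ⟨s2, hs2S, hs2max⟩ := hS2compact.exists_isMaxOn hS2ne hvfcont.continuousOn
    set h1 : ℝ := vf s1 with hh1def
    set h2 : ℝ := vf s2 with hh2def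
    have hs1W : s1 ∈ W := hs1S.1
    have hs2W : s2 ∈ W := hs2S.1
    have hgs1 : g s1 = -τ := hs1S.2
    have hgs2 : g s2 = τ := hs2S.2
    have hh1γ : h1 < γ := hvfW s1 hs1W
    have hh2γ : h2 < γ := hvfW s2 hs2W
    -- the point z on [c, s2] at level -τ
    obtain ⟨θa, θb, hθa0, hθb0, hθab, hgz⟩ := cross c s2 (-τ) (by rw [← hAdef]; linarith) (by rw [hgs2]; linarith)
    set z : EuclideanSpace ℝ (Fin d) := θa • c + θb • s2 with hzdef
    have hz1 : z ∈ U 1 := hcv 1 hc1 hs2W.1.2 hθa0 hθb0 hθab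
    have hzBall : z ∈ Ball := hBallconv hRc hs2W.2 hθa0 hθb0 hθab
    have hz0 : z ∈ U 0 := (key0 z hzBall (by rw [hgz]; linarith) (by rw [hgz]; linarith)).mpr hz1
    have hzS1 : z ∈ S1 := ⟨⟨⟨hz0, hz1⟩, hzBall⟩, hgz⟩
    have hvz : vf z ≤ h1 := hs1max hzS1
    -- the point w on [s1, e] at level τ
    obtain ⟨φa, φb, hφa0, hφb0, hφab, hgw⟩ := cross s1 e τ (by rw [hgs1]; linarith) (by rw [← hBdef]; linarith)
    set w : EuclideanSpace ℝ (Fin d) := φa • s1 + φb • e with hwdef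
    have hw0 : w ∈ U 0 := hcv 0 hs1W.1.1 he0 hφa0 hφb0 hφab
    have hwBall : w ∈ Ball := hBallconv hs1W.2 hRe hφa0 hφb0 hφab
    have hw1 : w ∈ U 1 := (key0 w hwBall (by rw [hgw]; linarith) (by rw [hgw]; linarith)).mp hw0
    have hwS2 : w ∈ S2 := ⟨⟨⟨hw0, hw1⟩, hwBall⟩, hgw⟩
    have hvw : vf w ≤ h2 := hs2max hwS2
    -- turn everything into real arithmetic
    set vc : ℝ := vf c with hvcdef
    set ve : ℝ := vf e with hvedef
    -- equation for θ : θa * A + θb * τ = -τ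
    have eqz : θa * A + θb * τ = -τ := by
      have hgz' := hgz
      rw [hzdef, gaff c s2 θa θb hθab, ← hAdef, hgs2] at hgz'
      linarith
    have eqw : φa * (-τ) + φb * B = τ := by
      have hgw' := hgw
      rw [hwdef, gaff s1 e φa φb hφab, hgs1, ← hBdef] at hgw'
      linarith
    have ineqz : θa * vc + θb * h2 ≤ h1 := by
      have hv := hvz
      rw [hzdef, vlin c s2 θa θb, ← hvcdef, ← hh2def] at hv
      exact hv
    have ineqw : φa * h1 + φb * ve ≤ h2 := by
      have hv := hvw
      rw [hwdef, vlin s1 e φa φb, ← hh1def, ← hvedef] at hv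
      exact hv
    -- clear the θ, φ coefficients
    have E1 : (τ - A) * (θa * vc + θb * h2) = 2 * τ * vc + (-A - τ) * h2 := by
      linear_combination (h2 - vc) * eqz + (τ * vc - A * h2) * hθab
    have E2 : (B + τ) * (φa * h1 + φb * ve) = (B - τ) * h1 + 2 * τ * ve := by
      linear_combination (ve - h1) * eqw + (B * h1 + τ * ve) * hφab
    have I1 : 2 * τ * vc + (-A - τ) * h2 ≤ (τ - A) * h1 := by
      have h := mul_le_mul_of_nonneg_left ineqz (show (0:ℝ) ≤ τ - A by linarith)
      rw [E1] at h
      exact h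
    have I2 : (B - τ) * h1 + 2 * τ * ve ≤ (B + τ) * h2 := by
      have h := mul_le_mul_of_nonneg_left ineqw (show (0:ℝ) ≤ B + τ by linarith)
      rw [E2] at h
      exact h
    have hvm_eq : (B - A) * vf m = B * vc + (-A) * ve := by
      have hne : B - A ≠ 0 := ne_of_gt hBA
      rw [hmdef, vlin c e ma mb, ← hvcdef, ← hvedef, hmadef, hmbdef]
      field_simp
    have J1 := mul_le_mul_of_nonneg_left I1 (show (0:ℝ) ≤ B by linarith)
    have J2 := mul_le_mul_of_nonneg_left I2 (show (0:ℝ) ≤ -A by linarith)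
    have K : 2 * τ * (B * vc + (-A) * ve) ≤ τ * (B - A) * h1 + τ * (B - A) * h2 := by
      ring_nf at J1 J2 ⊢
      linarith [J1, J2]
    rw [← hvm_eq] at K
    have pos : 0 < τ * (B - A) := mul_pos hτ hBA
    have L1 : τ * (B - A) * (h1 + h2) < τ * (B - A) * (2 * γ) :=
      mul_lt_mul_of_pos_left (by linarith) pos
    have L2 : τ * (B - A) * (2 * γ) < τ * (B - A) * (2 * vf m) :=
      mul_lt_mul_of_pos_left (by linarith) pos
    have L3 : 2 * τ * ((B - A) * vf m) = τ * (B - A) * (2 * vf m) := by ring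
    have L4 : τ * (B - A) * (h1 + h2) = τ * (B - A) * h1 + τ * (B - A) * h2 := by ring
    linarith [K, L1, L2, L3, L4]
  exact fact3 m hmW.1 hmW.2 hm3
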